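/- For a fixed d ≥ 0 and τ ∈ (0,1), the scalar function h(λ) = (λ/τ)((1 − ((1−τ)/λ)d)^{τ/(τ−1)} − 1), defined for λ > (1−τ)d, is nonnegative and monotone nonincreasing in λ, with lim_{λ→∞} h(λ) = d. -/

import Mathlib

open Real Filter

/-- Key pointwise inequality: for `p ≤ 0` and `u ∈ (0,1]`,
`u ^ (p-1) * (u + p * (1-u)) ≤ 1`. -/
lemma tau_entropy_key_ineq {p u : ℝ} (hp : p ≤ 0) (hu : 0 < u) (hu1 : u ≤ 1) :
    u ^ (p - 1) * (u + p * (1 - u)) ≤ 1 := by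
  have hbern : p + (1 - p) * u ≤ u ^ (1 - p) := by
    have h := one_add_mul_self_le_rpow_one_add (s := u - 1) (by linarith) (p := 1 - p)
      (by linarith)
    have h1 : (1 : ℝ) + (u - 1) = u := by ring
    rw [h1] at h
    linarith [h]
  calc u ^ (p - 1) * (u + p * (1 - u)) = u ^ (p - 1) * (p + (1 - p) * u) := by ring_nf
    _ ≤ u ^ (p - 1) * u ^ (1 - p) :=
        mul_le_mul_of_nonneg_left hbern (Real.rpow_nonneg hu.le _)
    _ = 1 := by rw [← Real.rpow_add hu]; norm_num

/-- The per-eigenvalue τ entropy `h(λ) = (λ/τ)((1 − ((1−τ)/λ)d)^{τ/(τ−1)} − 1)`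
is nonnegative and monotone nonincreasing on `λ > (1−τ)d`, and tends to `d`
as `λ → ∞`. -/
theorem tau_entropy_scalar_props (τ d : ℝ) (hτ0 : 0 < τ) (hτ1 : τ < 1) (hd : 0 ≤ d) :
    (∀ lam : ℝ, (1 - τ) * d < lam →
      0 ≤ (lam / τ) * ((1 - ((1 - τ) / lam) * d) ^ (τ / (τ - 1)) - 1)) ∧
    AntitoneOn (fun lam : ℝ => (lam / τ) * ((1 - ((1 - τ) / lam) * d) ^ (τ / (τ - 1)) - 1))
      (Set.Ioi ((1 - τ) * d)) ∧
    Filter.Tendsto (fun lam : ℝ => (lam / τ) * ((1 - ((1 - τ) / lam) * d) ^ (τ / (τ - 1)) - 1))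
      Filter.atTop (nhds d) := by
  set p : ℝ := τ / (τ - 1) with hpdef
  set c : ℝ := (1 - τ) * d with hcdef
  have hτ1' : τ - 1 < 0 := by linarith
  have hp : p ≤ 0 := div_nonpos_of_nonneg_of_nonpos hτ0.le hτ1'.le
  have hc : 0 ≤ c := mul_nonneg (by linarith) hd
  -- basic facts on the domain
  have hbase : ∀ lam : ℝ, c < lam → (1 - τ) / lam * d = c / lam := fun lam _ => by
    rw [div_mul_eq_mul_div]
  have hlam0 : ∀ lam : ℝ, c < lam → 0 < lam := fun lam h => lt_of_le_of_lt hc h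
  have hu0 : ∀ lam : ℝ, c < lam → 0 < 1 - c / lam := by
    intro lam h
    have h0 := hlam0 lam h
    rw [sub_pos]
    exact (div_lt_one h0).2 h
  have hu1 : ∀ lam : ℝ, c < lam → 1 - c / lam ≤ 1 := by
    intro lam h
    have h0 := hlam0 lam h
    nlinarith [div_nonneg hc h0.le]
  -- the derivative
  have hderiv : ∀ lam : ℝ, c < lam →
      HasDerivAt (fun l : ℝ => (l / τ) * ((1 - ((1 - τ) / l) * d) ^ p - 1))
        ((1 / τ) * ((1 - c / lam) ^ (p - 1) * ((1 - c / lam) + p * (c / lam)) - 1)) lam := by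
    intro lam hl
    have h0 := hlam0 lam hl
    have hu := hu0 lam hl
    have hne : (1 : ℝ) - (1 - τ) / lam * d ≠ 0 := by rw [hbase lam hl]; exact hu.ne'
    have H1 : HasDerivAt (fun l : ℝ => 1 - (1 - τ) / l * d) (c / lam ^ 2) lam := by
      have h := (((hasDerivAt_inv h0.ne').const_mul (1 - τ)).mul_const d).const_sub 1
      have hfun : (fun l : ℝ => 1 - (1 - τ) / l * d) = fun l : ℝ => 1 - (1 - τ) * l⁻¹ * d := by
        funext l; rw [div_eq_mul_inv]
      rw [hfun]
      refine h.congr_deriv ?_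
      rw [hcdef]
      ring
    have H2 := H1.rpow_const (p := p) (Or.inl hne)
    have H3 : HasDerivAt (fun l : ℝ => l / τ) (1 / τ) lam := (hasDerivAt_id lam).div_const τ
    have H := H3.mul (H2.sub_const 1)
    refine HasDerivAt.congr_deriv H ?_
    rw [hbase lam hl]
    have hup : (1 - c / lam) ^ p = (1 - c / lam) ^ (p - 1) * (1 - c / lam) := by
      rw [← Real.rpow_add_one hu.ne' (p - 1)]; norm_num
    rw [hup]
    field_simp
    ring
  have hderiv_nonpos : ∀ lam : ℝ, c < lam →
      (1 / τ) * ((1 - c / lam) ^ (p - 1) * ((1 - c / lam) + p * (c / lam)) - 1) ≤ 0 := by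
    intro lam hl
    have hkey := tau_entropy_key_ineq hp (hu0 lam hl) (hu1 lam hl)
    have h1u : (1 : ℝ) - (1 - c / lam) = c / lam := by ring
    rw [h1u] at hkey
    have hτ' : (0 : ℝ) < 1 / τ := by positivity
    nlinarith [hkey, hτ']
  refine ⟨?_, ?_, ?_⟩
  · -- nonnegativity
    intro lam hl
    have h0 := hlam0 lam hl
    have hu := hu0 lam hl
    have h1 : (1 : ℝ) ≤ (1 - (1 - τ) / lam * d) ^ p := by
      rw [hbase lam hl]
      exact Real.one_le_rpow_of_pos_of_le_one_of_nonpos hu (hu1 lam hl) hp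
    have h2 : (0 : ℝ) ≤ lam / τ := div_nonneg h0.le hτ0.le
    nlinarith
  · -- antitone
    apply antitoneOn_of_deriv_nonpos (convex_Ioi c)
    · intro x hx
      exact (hderiv x hx).continuousAt.continuousWithinAt
    · rw [interior_Ioi]
      intro x hx
      exact (hderiv x hx).differentiableAt.differentiableWithinAt
    · rw [interior_Ioi]
      intro x hx
      rw [(hderiv x hx).deriv]
      exact hderiv_nonpos x hx
  · -- limit
    by_cases hd0 : d = 0
    · subst hd0
      have : (fun lam : ℝ => (lam / τ) * ((1 - (1 - τ) / lam * 0) ^ p - 1)) = fun _ => (0 : ℝ) := by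
        funext lam; simp [Real.one_rpow]
      rw [this]
      exact tendsto_const_nhds
    · have hdpos : 0 < d := lt_of_le_of_ne hd (Ne.symm hd0)
      have hc0 : 0 < c := mul_pos (by linarith) hdpos
      set F : ℝ → ℝ := fun x => (1 - x) ^ p with hFdef
      have hF : HasDerivAt F (-p) 0 := by
        have h := ((hasDerivAt_id (0 : ℝ)).const_sub 1).rpow_const (p := p)
          (Or.inl (by norm_num))
        simpa [hFdef] using h
      have hslope := hasDerivAt_iff_tendsto_slope.1 hF
      have htend : Tendsto (fun lam : ℝ => c / lam) atTop (nhdsWithin 0 {(0 : ℝ)}ᶜ) := by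
        rw [tendsto_nhdsWithin_iff]
        constructor
        · simpa [div_eq_mul_inv] using tendsto_inv_atTop_zero.const_mul c
        · filter_upwards [eventually_gt_atTop (0 : ℝ)] with x hx
          simp [(div_pos hc0 hx).ne']
      have hcomp := hslope.comp htend
      have hmul := hcomp.const_mul (c / τ)
      have hval : (c / τ) * (-p) = d := by
        have h1 : τ - 1 ≠ 0 := hτ1'.ne
        rw [hcdef, hpdef]
        field_simp
        ring
      rw [hval] at hmul
      refine hmul.congr' ?_
      filter_upwards [eventually_gt_atTop (max c 0)] with lam hlam
      have h0 : 0 < lam := lt_of_le_of_lt (le_max_right c 0) hlam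
      have hl : c < lam := lt_of_le_of_lt (le_max_left c 0) hlam
      simp only [Function.comp_apply, slope_def_field, hFdef]
      rw [hbase lam hl]
      field_simp
      rw [sub_zero, mul_zero, sub_zero, Real.one_rpow]
      exact mul_div_cancel_left₀ _ hc0.ne'
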